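/- Let N be an even positive integer and k an odd positive integer, and let m be a divisor of N such that 2*m^2 divides N*k. Then the number of divisors d of N/2 satisfying gcd(d, N*k/(2*d)) = m is exactly 2^(p_m + t_m). -/

import Mathlib

open Finset

lemma aux_fact_prod (m : ℕ) (hm0 : m ≠ 0) (A : Finset ℕ) (hA : ∀ p ∈ A, p.Prime)
    (e : ℕ → ℕ) (q : ℕ) :
    (m * ∏ p ∈ A, p ^ e p).factorization q
      = m.factorization q + (if q ∈ A then e q else 0) := by
  have hprod0 : (∏ p ∈ A, p ^ e p) ≠ 0 := by
    apply Finset.prod_ne_zero_iff.mpr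
    intro p hp
    exact pow_ne_zero _ (hA p hp).pos.ne'
  rw [Nat.factorization_mul hm0 hprod0, Finsupp.add_apply,
    Nat.factorization_prod (fun p hp => pow_ne_zero _ (hA p hp).pos.ne')]
  congr 1
  rw [Finsupp.finset_sum_apply]
  have : ∀ p ∈ A, ((p ^ e p).factorization) q = if p = q then e p else 0 := by
    intro p hp
    rw [(hA p hp).factorization_pow, Finsupp.single_apply]
  rw [Finset.sum_congr rfl this, Finset.sum_ite_eq' A q e]


/-- `p_m`: the number of odd primes dividing `N*m'/m^2` but not `k/m'`, where `m' = gcd(m,k)`. -/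
def pm (N k m : ℕ) : ℕ :=
  ((N * Nat.gcd m k / m ^ 2).primeFactors.filter
    (fun p => p ≠ 2 ∧ ¬ p ∣ k / Nat.gcd m k)).card

/-- `t_m`: equal to `0` if `N*m'/m^2` is odd, or `4 ∣ k/m'`, or both
`N*m'/m^2 ≡ 2 (mod 4)` and `k/m'` is odd; and equal to `1` otherwise. -/
def tm (N k m : ℕ) : ℕ :=
  if Odd (N * Nat.gcd m k / m ^ 2) ∨ 4 ∣ k / Nat.gcd m k ∨
      ((N * Nat.gcd m k / m ^ 2) % 4 = 2 ∧ Odd (k / Nat.gcd m k)) then 0 else 1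

theorem card_divisors_with_gcd_eq_even_odd_case (N k m : ℕ) (hN : 0 < N) (hNeven : Even N)
    (hk : 0 < k) (hkodd : Odd k) (hm : m ∣ N) (hm2 : 2 * m ^ 2 ∣ N * k) :
    ((N / 2).divisors.filter (fun d => Nat.gcd d (N * k / (2 * d)) = m)).card
      = 2 ^ (pm N k m + tm N k m) := by
  classical
  have hN0 : N ≠ 0 := hN.ne'
  have hk0 : k ≠ 0 := hk.ne'
  have hm0 : m ≠ 0 := fun h => hN0 (by simpa [h] using hm)
  have h2N : 2 ∣ N := hNeven.two_dvd
  set n2 := N / 2 with hn2def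
  have hN2 : N = 2 * n2 := (Nat.mul_div_cancel' h2N).symm
  have hn20 : n2 ≠ 0 := by rintro h; rw [h, mul_zero] at hN2; exact hN0 hN2
  set M := n2 * k with hMdef
  have hM0 : M ≠ 0 := mul_ne_zero hn20 hk0
  have hMN : N * k = 2 * M := by rw [hN2]; ring
  have hSeq : (n2.divisors.filter (fun d => Nat.gcd d (N * k / (2 * d)) = m))
      = n2.divisors.filter (fun d => Nat.gcd d (M / d) = m) := by
    apply Finset.filter_congr
    intro d _
    rw [hMN, Nat.mul_div_mul_left _ _ (by norm_num : (0:ℕ) < 2)]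
  rw [hSeq]
  have hEfk : ∀ p, M.factorization p = n2.factorization p + k.factorization p := by
    intro p
    rw [hMdef, Nat.factorization_mul hn20 hk0]; rfl
  have hκ2 : k.factorization 2 = 0 := Nat.factorization_eq_zero_of_not_dvd (by
    rw [Nat.odd_iff] at hkodd; omega)
  have hm2M : m ^ 2 ∣ M := by
    have := hMN ▸ hm2
    exact (mul_dvd_mul_iff_left (two_ne_zero)).mp this
  have h2c : ∀ p, 2 * m.factorization p ≤ M.factorization p := by
    intro p
    have h := (Nat.factorization_le_iff_dvd (pow_ne_zero 2 hm0) hM0).mpr hm2M p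
    rwa [Nat.factorization_pow, Finsupp.smul_apply, smul_eq_mul] at h
  have hNfact : ∀ p, N.factorization p = (if 2 = p then 1 else 0) + n2.factorization p := by
    intro p
    rw [hN2, Nat.factorization_mul two_ne_zero hn20, Finsupp.add_apply,
      Nat.Prime.factorization Nat.prime_two, Finsupp.single_apply]
  have hcf : ∀ p, m.factorization p ≤ n2.factorization p := by
    intro p
    have hmN := (Nat.factorization_le_iff_dvd hm0 hN0).mpr hm p
    rw [hNfact p] at hmN
    by_cases hp2 : p = 2
    · subst hp2
      have h1 := h2c 2
      rw [hEfk 2, hκ2] at h1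
      omega
    · simp only [show ¬(2 = p) by omega, if_false] at hmN; omega
  set P : Finset ℕ := M.primeFactors.filter (fun p =>
      2 * m.factorization p < M.factorization p ∧
      M.factorization p - m.factorization p ≤ n2.factorization p) with hP
  have hPprime : ∀ p ∈ P, p.Prime := fun p hp =>
    Nat.prime_of_mem_primeFactors (Finset.mem_filter.mp hp).1
  have step1 : (n2.divisors.filter (fun d => Nat.gcd d (M / d) = m)).card = 2 ^ P.card := by
    rw [← Finset.card_powerset]
    set φ : Finset ℕ → ℕ := fun A =>
      m * ∏ p ∈ A, p ^ (M.factorization p - 2 * m.factorization p) with hφdef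
    set ψ : ℕ → Finset ℕ := fun d =>
      P.filter (fun p => d.factorization p ≠ m.factorization p) with hψdef
    have hφ0 : ∀ A, A ⊆ P → φ A ≠ 0 := by
      intro A hA
      apply mul_ne_zero hm0
      apply Finset.prod_ne_zero_iff.mpr
      intro p hp
      exact pow_ne_zero _ (hPprime p (hA hp)).pos.ne'
    have hφfact : ∀ A, A ⊆ P → ∀ q, (φ A).factorization q =
        if q ∈ A then M.factorization q - m.factorization q else m.factorization q := by
      intro A hA q
      rw [hφdef]
      rw [aux_fact_prod m hm0 A (fun p hp => hPprime p (hA hp))]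
      by_cases hq : q ∈ A
      · have h2 := h2c q
        simp only [hq, if_true]
        omega
      · simp [hq]
    have hφmemP : ∀ A, A ⊆ P → φ A ∈ n2.divisors.filter (fun d => Nat.gcd d (M / d) = m) := by
      intro A hA
      have hA0 := hφ0 A hA
      have hdvdn2 : φ A ∣ n2 := by
        rw [← Nat.factorization_le_iff_dvd hA0 hn20]
        intro q
        rw [hφfact A hA q]
        by_cases hq : q ∈ A
        · simp only [hq, if_true]
          exact (Finset.mem_filter.mp (hA hq)).2.2
        · simp only [hq, if_false]
          exact hcf q
      have hdvdM : φ A ∣ M := by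
        rw [← Nat.factorization_le_iff_dvd hA0 hM0]
        intro q
        rw [hφfact A hA q]
        have h2 := h2c q
        by_cases hq : q ∈ A <;> simp only [hq, if_true, if_false] <;> omega
      have hMd0 : M / φ A ≠ 0 := by
        have := Nat.mul_div_cancel' hdvdM
        intro h; rw [h, mul_zero] at this; exact hM0 this.symm
      rw [Finset.mem_filter]
      refine ⟨Nat.mem_divisors.mpr ⟨hdvdn2, hn20⟩, ?_⟩
      have hg0 : Nat.gcd (φ A) (M / φ A) ≠ 0 := fun h => hA0 (Nat.eq_zero_of_gcd_eq_zero_left h)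
      apply Nat.factorization_inj (Set.mem_setOf_eq ▸ hg0) (Set.mem_setOf_eq ▸ hm0)
      ext q
      rw [Nat.factorization_gcd hA0 hMd0, Finsupp.inf_apply, Nat.factorization_div hdvdM,
        Finsupp.tsub_apply]
      rw [hφfact A hA q]
      have h2 := h2c q
      rw [Nat.min_def]
      by_cases hq : q ∈ A <;> simp only [hq, if_true, if_false] <;> split <;> omega
    have hkey : ∀ d ∈ n2.divisors.filter (fun d => Nat.gcd d (M / d) = m),
        d ≠ 0 ∧ ∀ q, d.factorization q = m.factorization q ∨
          (d.factorization q = M.factorization q - m.factorization q ∧ q ∈ P) := by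
      intro d hd
      rw [Finset.mem_filter, Nat.mem_divisors] at hd
      obtain ⟨⟨hdn2, -⟩, hgcd⟩ := hd
      have hd0 : d ≠ 0 := fun h => hn20 (by simpa [h] using hdn2)
      have hdM : d ∣ M := hdn2.trans (dvd_mul_right n2 k)
      have hMd0 : M / d ≠ 0 := by
        have := Nat.mul_div_cancel' hdM
        intro h; rw [h, mul_zero] at this; exact hM0 this.symm
      have haf : ∀ q, d.factorization q ≤ n2.factorization q :=
        (Nat.factorization_le_iff_dvd hd0 hn20).mpr hdn2
      have haE : ∀ q, d.factorization q ≤ M.factorization q :=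
        (Nat.factorization_le_iff_dvd hd0 hM0).mpr hdM
      have hmin : ∀ q, min (d.factorization q) (M.factorization q - d.factorization q)
          = m.factorization q := by
        intro q
        have := congrArg (fun x => x.factorization q) hgcd
        rwa [Nat.factorization_gcd hd0 hMd0, Finsupp.inf_apply, Nat.factorization_div hdM,
          Finsupp.tsub_apply] at this
      refine ⟨hd0, fun q => ?_⟩
      by_cases hq : q.Prime
      · have h2 := h2c q
        have hq1 := hmin q
        rw [Nat.min_def] at hq1
        by_cases heq : d.factorization q = m.factorization q
        · exact Or.inl heq
        · right
          have hav := haf q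
          have haE' := haE q
          constructor
          · split at hq1 <;> omega
          · rw [hP, Finset.mem_filter, Nat.mem_primeFactors]
            refine ⟨⟨hq, (Nat.Prime.dvd_iff_one_le_factorization hq hM0).mpr ?_, hM0⟩, ?_, ?_⟩
              <;> split at hq1 <;> omega
      · left
        rw [Nat.factorization_eq_zero_of_not_prime d hq,
          Nat.factorization_eq_zero_of_not_prime m hq]
    apply Finset.card_nbij' ψ φ
    · intro d _
      simp only [hψdef]
      exact Finset.mem_powerset.mpr (Finset.filter_subset _ _)
    · intro A hA
      exact hφmemP A (Finset.mem_powerset.mp hA)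
    · intro d hd
      obtain ⟨hd0, hkey'⟩ := hkey d hd
      have hsub : ψ d ⊆ P := Finset.filter_subset _ _
      apply Nat.factorization_inj (hφ0 (ψ d) hsub) hd0
      ext q
      rw [hφfact (ψ d) hsub q]
      by_cases hq : q ∈ ψ d
      · simp only [hq, if_true]
        have hne : d.factorization q ≠ m.factorization q := by
          have := hq
          simp only [hψdef, Finset.mem_filter] at this
          exact this.2
        rcases hkey' q with h | h
        · exact absurd h hne
        · exact h.1.symm
      · simp only [hq, if_false]
        by_cases heq : d.factorization q = m.factorization q
        · exact heq.symm
        · exfalso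
          apply hq
          rcases hkey' q with h | h
          · exact absurd h heq
          · simp only [hψdef, Finset.mem_filter]
            exact ⟨h.2, heq⟩
    · intro A hA
      rw [Finset.mem_coe, Finset.mem_powerset] at hA
      ext q
      simp only [hψdef, Finset.mem_filter]
      by_cases hqA : q ∈ A
      · simp only [hqA, iff_true]
        have hqP := hA hqA
        refine ⟨hqP, ?_⟩
        rw [hφfact A hA q]
        simp only [hqA, if_true]
        have h1 : 2 * m.factorization q < M.factorization q :=
          (Finset.mem_filter.mp hqP).2.1
        omega
      · simp only [hqA, iff_false]
        rintro ⟨hqP, hne⟩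
        rw [hφfact A hA q] at hne
        simp [hqA] at hne
  have step2 : P.card = pm N k m + tm N k m := by
    have hg0 : Nat.gcd m k ≠ 0 := fun h => hm0 (Nat.eq_zero_of_gcd_eq_zero_left h)
    have hgk : Nat.gcd m k ∣ k := Nat.gcd_dvd_right m k
    have hgfact : ∀ p, (Nat.gcd m k).factorization p
        = min (m.factorization p) (k.factorization p) := by
      intro p
      rw [Nat.factorization_gcd hm0 hk0, Finsupp.inf_apply]
    have hkg0 : k / Nat.gcd m k ≠ 0 := by
      have := Nat.mul_div_cancel' hgk
      intro h; rw [h, mul_zero] at this; exact hk0 this.symm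
    have hkgfact : ∀ p, (k / Nat.gcd m k).factorization p
        = k.factorization p - (Nat.gcd m k).factorization p := by
      intro p
      rw [Nat.factorization_div hgk, Finsupp.tsub_apply]
    have hfN : ∀ p, n2.factorization p ≤ N.factorization p := by
      intro p
      have := hNfact p
      omega
    have hm2Ng : m ^ 2 ∣ N * Nat.gcd m k := by
      rw [← Nat.factorization_le_iff_dvd (pow_ne_zero 2 hm0) (mul_ne_zero hN0 hg0)]
      intro p
      rw [Nat.factorization_pow, Finsupp.smul_apply, smul_eq_mul,
        Nat.factorization_mul hN0 hg0, Finsupp.add_apply]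
      have h1 := hfN p
      have h3 := hcf p
      have h4 := h2c p
      have h5 := hEfk p
      have h6 := hgfact p
      rcases le_total (m.factorization p) (k.factorization p) with h | h
      · rw [min_eq_left h] at h6; omega
      · rw [min_eq_right h] at h6; omega
    have hQ0 : N * Nat.gcd m k / m ^ 2 ≠ 0 := by
      have := Nat.mul_div_cancel' hm2Ng
      intro h; rw [h, mul_zero] at this
      exact (mul_ne_zero hN0 hg0) this.symm
    have hQfact : ∀ p, (N * Nat.gcd m k / m ^ 2).factorization p
        = N.factorization p + (Nat.gcd m k).factorization p - 2 * m.factorization p := by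
      intro p
      rw [Nat.factorization_div hm2Ng, Finsupp.tsub_apply,
        Nat.factorization_mul hN0 hg0, Finsupp.add_apply,
        Nat.factorization_pow, Finsupp.smul_apply, smul_eq_mul]
    have hkg_dvd_k : k / Nat.gcd m k ∣ k := Nat.div_dvd_of_dvd hgk
    have hkgodd : k / Nat.gcd m k % 2 = 1 := by
      have h1 := Nat.odd_iff.mp hkodd
      by_contra h
      have h2 : 2 ∣ k / Nat.gcd m k := by omega
      have h3 := h2.trans hkg_dvd_k
      omega
    have h4kg : ¬ (4 ∣ k / Nat.gcd m k) := by
      intro h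
      omega
    -- split P into odd primes and p = 2
    rw [← Finset.card_filter_add_card_filter_not (s := P) (p := fun p => p ≠ 2)]
    congr 1
    -- odd part equals pm
    · have hA : P.filter (fun p => p ≠ 2)
          = (N * Nat.gcd m k / m ^ 2).primeFactors.filter
              (fun p => p ≠ 2 ∧ ¬ p ∣ k / Nat.gcd m k) := by
        ext p
        simp only [hP, Finset.mem_filter, Nat.mem_primeFactors, ne_eq]
        constructor
        · rintro ⟨⟨⟨hp, hpM, -⟩, h1, h2⟩, hp2⟩
          have hpM' := (hp.dvd_iff_one_le_factorization hM0).mp hpM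
          have hN' := hNfact p
          rw [if_neg (by omega : ¬ (2 = p))] at hN'
          have hE' := hEfk p
          have hg' := hgfact p
          have hQ' := hQfact p
          have hkg' := hkgfact p
          have hc' := hcf p
          have h2c' := h2c p
          have hκc : k.factorization p ≤ m.factorization p := by omega
          rw [min_eq_right hκc] at hg'
          refine ⟨⟨hp, (hp.dvd_iff_one_le_factorization hQ0).mpr (by omega), hQ0⟩,
            (by omega), fun hdvd => ?_⟩
          have := (hp.dvd_iff_one_le_factorization hkg0).mp hdvd
          omega
        · rintro ⟨⟨hp, hpQ, -⟩, hp2, hpk⟩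
          have hpQ' := (hp.dvd_iff_one_le_factorization hQ0).mp hpQ
          have hpk' : ¬ 1 ≤ (k / Nat.gcd m k).factorization p :=
            fun h => hpk ((hp.dvd_iff_one_le_factorization hkg0).mpr h)
          have hN' := hNfact p
          rw [if_neg (by omega : ¬ (2 = p))] at hN'
          have hE' := hEfk p
          have hg' := hgfact p
          have hQ' := hQfact p
          have hkg' := hkgfact p
          have hc' := hcf p
          have h2c' := h2c p
          have hκc : k.factorization p ≤ m.factorization p := by
            rcases le_total (m.factorization p) (k.factorization p) with h | h
            · rw [min_eq_left h] at hg'; omega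
            · exact h
          rw [min_eq_right hκc] at hg'
          exact ⟨⟨⟨hp, (hp.dvd_iff_one_le_factorization hM0).mpr (by omega), hM0⟩,
            (by omega), (by omega)⟩, (by omega)⟩
      rw [hA, pm]
    -- p = 2 part equals tm
    · have hQ2 : (N * Nat.gcd m k / m ^ 2).factorization 2
          = 1 + n2.factorization 2 - 2 * m.factorization 2 := by
        have hQ' := hQfact 2
        have hN' := hNfact 2
        rw [if_pos rfl] at hN'
        have hg' := hgfact 2
        rw [hκ2, min_eq_right (Nat.zero_le _)] at hg'
        omega
      have h2c2 : 2 * m.factorization 2 ≤ n2.factorization 2 := by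
        have := h2c 2
        have := hEfk 2
        omega
      have h4Q : 4 ∣ N * Nat.gcd m k / m ^ 2
          ↔ 2 ≤ (N * Nat.gcd m k / m ^ 2).factorization 2 := by
        rw [show (4 : ℕ) = 2 ^ 2 by norm_num]
        exact Nat.Prime.pow_dvd_iff_le_factorization Nat.prime_two hQ0
      have h2Q : 2 ∣ N * Nat.gcd m k / m ^ 2
          ↔ 1 ≤ (N * Nat.gcd m k / m ^ 2).factorization 2 :=
        Nat.Prime.dvd_iff_one_le_factorization Nat.prime_two hQ0
      have hfilter2 : P.filter (fun p => ¬ p ≠ 2) = P.filter (fun p => p = 2) := by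
        simp only [ne_eq, not_not]
      rw [hfilter2, Finset.filter_eq' P 2, tm]
      have h2P : 2 ∈ P ↔ 2 * m.factorization 2 < n2.factorization 2 := by
        rw [hP, Finset.mem_filter, Nat.mem_primeFactors]
        have hE2 : M.factorization 2 = n2.factorization 2 := by
          have := hEfk 2; omega
        constructor
        · rintro ⟨-, h1, -⟩; omega
        · intro h
          refine ⟨⟨Nat.prime_two,
            (Nat.prime_two.dvd_iff_one_le_factorization hM0).mpr (by omega), hM0⟩,
            by omega, by omega⟩
      by_cases hcond : 2 * m.factorization 2 < n2.factorization 2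
      · rw [if_pos (h2P.mpr hcond)]
        have h4Qd : 4 ∣ N * Nat.gcd m k / m ^ 2 := h4Q.mpr (by omega)
        rw [if_neg ?_, Finset.card_singleton]
        rw [Nat.odd_iff]
        rintro (h | h | ⟨h, -⟩)
        · omega
        · exact h4kg h
        · omega
      · rw [if_neg (fun h => hcond (h2P.mp h))]
        have h2Qd : 2 ∣ N * Nat.gcd m k / m ^ 2 := h2Q.mpr (by omega)
        have h4Qd : ¬ 4 ∣ N * Nat.gcd m k / m ^ 2 := fun h => by
          have := h4Q.mp h; omega
        rw [if_pos ?_, Finset.card_empty]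
        refine Or.inr (Or.inr ⟨by omega, Nat.odd_iff.mpr hkgodd⟩)
  rw [step1, step2]
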